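/- Bailey pair inversion: Let a, q be elements of a field (or formal parameters with |q|<1), and let (α_n), (β_n) be sequences indexed by n ≥ 0. Then β_n = Σ_{j=0}^{n} α_j / ((q;q)_{n-j} (aq;q)_{n+j}) for all n ≥ 0 if and only if α_n = ((1 - a q^{2n})/(1 - a)) Σ_{j=0}^{n} ((a;q)_{n+j}/(q;q)_{n-j}) (-1)^{n-j} q^{binom(n-j,2)} β_j for all n ≥ 0. -/

import Mathlib

/-- The q-Pochhammer symbol `(x;q)_k = ∏_{i=0}^{k-1} (1 - x q^i)`. -/
noncomputable def qp (q x : ℂ) (k : ℕ) : ℂ := ∏ i ∈ Finset.range k, (1 - x * q ^ i)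

lemma qp_zero (q x : ℂ) : qp q x 0 = 1 := Finset.prod_range_zero _

lemma qp_succ (q x : ℂ) (k : ℕ) : qp q x (k + 1) = qp q x k * (1 - x * q ^ k) :=
  Finset.prod_range_succ _ _

lemma qp_add (q x : ℂ) (m n : ℕ) : qp q x (m + n) = qp q x m * qp q (x * q ^ m) n := by
  rw [qp, Finset.prod_range_add]
  congr 1
  unfold qp
  apply Finset.prod_congr rfl
  intro i _
  rw [pow_add, mul_assoc]

lemma qp_ne_zero {q x : ℂ} (h : ∀ i : ℕ, x * q ^ i ≠ 1) (k : ℕ) : qp q x k ≠ 0 := by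
  apply Finset.prod_ne_zero_iff.mpr
  intro i _
  intro hcon
  exact h i (by linear_combination -hcon)

noncomputable def tt (q c : ℂ) (m i : ℕ) : ℂ :=
  (-1) ^ i * q ^ (i * (i - 1) / 2) * (1 - c * q ^ (2 * i)) * qp q c i /
    (qp q q i * qp q q (m - i) * qp q (c * q ^ (m + 1)) i)

noncomputable def gg (q c : ℂ) (m i : ℕ) : ℂ :=
  -((-1) ^ i * q ^ (i * (i - 1) / 2) * (1 - q ^ i) * (1 - c * q ^ (m + i)) * qp q c i) /
    ((1 - q ^ m) * (qp q q i * qp q q (m - i) * qp q (c * q ^ (m + 1)) i))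

lemma tri_succ (i : ℕ) : (i + 1) * ((i + 1) - 1) / 2 = i * (i - 1) / 2 + i := by
  rcases i with _ | n
  · rfl
  · have h1 : (n + 1 + 1) * (n + 1 + 1 - 1) = (n + 1) * (n + 1 - 1) + (n + 1) * 2 := by
      simp only [Nat.add_sub_cancel]; ring
    rw [h1, Nat.add_mul_div_right _ _ (by norm_num : 0 < 2)]

lemma step (q c : ℂ) (hq : ∀ k : ℕ, 1 ≤ k → q ^ k ≠ 1) (hc : ∀ s : ℕ, c * q ^ s ≠ 1)
    (m i : ℕ) (him : i + 1 ≤ m) :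
    tt q c m i = gg q c m (i + 1) - gg q c m i := by
  obtain ⟨j, hj⟩ : ∃ j, m = j + i + 1 := ⟨m - i - 1, by omega⟩
  subst hj
  have e1 : j + i + 1 - i = j + 1 := by omega
  have e2 : j + i + 1 - (i + 1) = j := by omega
  have hpow : (q : ℂ) ^ ((i + 1) * ((i + 1) - 1) / 2) = q ^ (i * (i - 1) / 2) * q ^ i := by
    rw [tri_succ, pow_add]
  have hq1 : ∀ k : ℕ, (1 : ℂ) - q ^ (k + 1) ≠ 0 := fun k => sub_ne_zero.mpr fun h => hq (k + 1) (by omega) h.symm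
  have hc1 : ∀ s : ℕ, (1 : ℂ) - c * q ^ s ≠ 0 := fun s => sub_ne_zero.mpr fun h => hc s h.symm
  have hqm : (1 : ℂ) - q ^ (j + i + 1) ≠ 0 := hq1 _
  have hA : qp q q i ≠ 0 := qp_ne_zero (fun t => by
      intro h; exact hq (t + 1) (by omega) (by rw [pow_succ]; linear_combination h)) i
  have hB : qp q q (j + 1) ≠ 0 := qp_ne_zero (fun t => by
      intro h; exact hq (t + 1) (by omega) (by rw [pow_succ]; linear_combination h)) (j + 1)
  have hBj : qp q q j ≠ 0 := qp_ne_zero (fun t => by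
      intro h; exact hq (t + 1) (by omega) (by rw [pow_succ]; linear_combination h)) j
  have hD : qp q (c * q ^ (j + i + 1 + 1)) i ≠ 0 := qp_ne_zero (fun t => by
      intro h; exact hc (j + i + 1 + 1 + t) (by rw [pow_add]; linear_combination h)) i
  have hfac1 : (1 : ℂ) - q * q ^ i ≠ 0 := by
    have := hq1 i; rw [pow_succ] at this; simpa [mul_comm] using this
  have hfac2 : (1 : ℂ) - c * q ^ (j + i + 1 + 1) * q ^ i ≠ 0 := by
    have := hc1 (j + i + 1 + 1 + i); rw [pow_add] at this
    simpa [mul_assoc] using this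
  rw [tt, gg, gg, e1, e2, qp_succ q c i, qp_succ q q i, qp_succ q (c * q ^ (j + i + 1 + 1)) i,
    hpow, qp_succ q q j]
  have hfac3 : (1 : ℂ) - q * q ^ j ≠ 0 := by
    have := hq1 j; rw [pow_succ] at this; simpa [mul_comm] using this
  have hDA := mul_ne_zero (mul_ne_zero hA (mul_ne_zero hBj hfac3)) hD
  have hDB := mul_ne_zero hqm
    (mul_ne_zero (mul_ne_zero (mul_ne_zero hA hfac1) hBj) (mul_ne_zero hD hfac2))
  have hDC := mul_ne_zero hqm (mul_ne_zero (mul_ne_zero hA (mul_ne_zero hBj hfac3)) hD)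
  rw [div_sub_div _ _ hDB hDC, div_eq_div_iff hDA (mul_ne_zero hDB hDC)]
  ring


lemma gg_zero (q c : ℂ) (m : ℕ) : gg q c m 0 = 0 := by
  simp [gg]

lemma gg_last (q c : ℂ) (hq : ∀ k : ℕ, 1 ≤ k → q ^ k ≠ 1) (hc : ∀ s : ℕ, c * q ^ s ≠ 1)
    (m : ℕ) (hm : 1 ≤ m) :
    gg q c m m = - tt q c m m := by
  have hqm : (1 : ℂ) - q ^ m ≠ 0 := sub_ne_zero.mpr fun h => hq m hm h.symm
  have hA : qp q q m ≠ 0 := qp_ne_zero (fun t => by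
      intro h; exact hq (t + 1) (by omega) (by rw [pow_succ]; linear_combination h)) m
  have hD : qp q (c * q ^ (m + 1)) m ≠ 0 := qp_ne_zero (fun t => by
      intro h; exact hc (m + 1 + t) (by rw [pow_add]; linear_combination h)) m
  rw [gg, tt, Nat.sub_self, qp_zero]
  rw [neg_div, neg_inj, div_eq_div_iff
    (mul_ne_zero hqm (mul_ne_zero (mul_ne_zero hA one_ne_zero) hD))
    (mul_ne_zero (mul_ne_zero hA one_ne_zero) hD)]
  ring

lemma Tsum (q c : ℂ) (hq : ∀ k : ℕ, 1 ≤ k → q ^ k ≠ 1) (hc : ∀ s : ℕ, c * q ^ s ≠ 1)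
    (m : ℕ) (hm : 1 ≤ m) : ∑ i ∈ Finset.range (m + 1), tt q c m i = 0 := by
  rw [Finset.sum_range_succ]
  have h1 : ∑ i ∈ Finset.range m, tt q c m i = gg q c m m - gg q c m 0 := by
    rw [← Finset.sum_range_sub (gg q c m)]
    apply Finset.sum_congr rfl
    intro i hi
    exact step q c hq hc m i (Finset.mem_range.mp hi)
  rw [h1, gg_zero, gg_last q c hq hc m hm]
  ring

noncomputable def Mm (q a : ℂ) (n j : ℕ) : ℂ := (qp q q (n - j) * qp q (a * q) (n + j))⁻¹

noncomputable def Nm (q a : ℂ) (n j : ℕ) : ℂ :=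
  (1 - a * q ^ (2 * n)) / (1 - a) * (qp q a (n + j) / qp q q (n - j)) * (-1) ^ (n - j) *
    q ^ ((n - j) * ((n - j) - 1) / 2)

lemma term_eq (q a : ℂ) (hq : ∀ k : ℕ, 1 ≤ k → q ^ k ≠ 1) (ha : ∀ k : ℕ, a * q ^ k ≠ 1)
    (k m i : ℕ) (him : i ≤ m) :
    Mm q a (k + m) (k + i) * Nm q a (k + i) k
      = tt q (a * q ^ (2 * k)) m i / qp q (a * q ^ (2 * k)) (m + 1) := by
  set c := a * q ^ (2 * k) with hcdef
  have hc : ∀ s : ℕ, c * q ^ s ≠ 1 := fun s => by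
    rw [hcdef, mul_assoc, ← pow_add]; exact ha _
  have hqA : ∀ t : ℕ, qp q q t ≠ 0 := fun t => qp_ne_zero (fun u => by
      intro h; exact hq (u + 1) (by omega) (by rw [pow_succ]; linear_combination h)) t
  have haA : ∀ s t : ℕ, qp q (a * q ^ s) t ≠ 0 := fun s t => qp_ne_zero (fun u => by
      intro h; exact ha (s + u) (by rw [pow_add]; linear_combination h)) t
  have ha1 : (1 : ℂ) - a ≠ 0 := sub_ne_zero.mpr fun h => ha 0 (by rw [pow_zero, mul_one]; exact h.symm)
  have haq : ∀ t : ℕ, qp q (a * q) t ≠ 0 := fun t => by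
    have := haA 1 t; rwa [pow_one] at this
  have haa : ∀ t : ℕ, qp q a t ≠ 0 := fun t => by
    have := haA 0 t; rwa [pow_zero, mul_one] at this
  have hcA : ∀ s t : ℕ, qp q (c * q ^ s) t ≠ 0 := fun s t => qp_ne_zero (fun u => by
      intro h; exact hc (s + u) (by rw [pow_add]; linear_combination h)) t
  have hcB : ∀ t : ℕ, qp q c t ≠ 0 := fun t => by
    have := hcA 0 t; rwa [pow_zero, mul_one] at this
  -- index arithmetic
  have e1 : k + m - (k + i) = m - i := by omega
  have e2 : k + m + (k + i) = 2 * k + m + i := by omega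
  have e3 : k + i + k = 2 * k + i := by omega
  have e4 : k + i - k = i := by omega
  -- key product identity
  have key : qp q a (2 * k + i) * qp q (c * q ^ (m + 1)) i * qp q c (m + 1)
      = qp q c i * ((1 - a) * qp q (a * q) (2 * k + m + i)) := by
    have h1 : (1 - a) * qp q (a * q) (2 * k + m + i) = qp q a (2 * k + m + i + 1) := by
      rw [show 2 * k + m + i + 1 = 1 + (2 * k + m + i) by ring, qp_add q a 1 (2 * k + m + i),
        pow_one]
      congr 1
      rw [qp]; simp
    rw [h1]
    have h2 : qp q a (2 * k + m + i + 1) = qp q a (2 * k + i) * qp q (c * q ^ i) (m + 1) := by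
      rw [show 2 * k + m + i + 1 = (2 * k + i) + (m + 1) by ring, qp_add q a (2 * k + i) (m + 1)]
      congr 2
      rw [hcdef, pow_add]; ring
    have h3 : qp q c i * qp q (c * q ^ i) (m + 1) = qp q c (m + 1) * qp q (c * q ^ (m + 1)) i := by
      rw [← qp_add, ← qp_add, add_comm]
    linear_combination (-(qp q c i)) * h2 - qp q a (2 * k + i) * h3
  rw [Mm, Nm, e1, e2, e3, e4, tt]
  have hpre : (1 : ℂ) - a * q ^ (2 * (k + i)) = 1 - c * q ^ (2 * i) := by
    rw [hcdef, mul_assoc, ← pow_add, show 2 * k + 2 * i = 2 * (k + i) from by ring]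
  rw [hpre]
  field_simp
  rw [div_eq_div_iff
    (mul_ne_zero (mul_ne_zero (hqA (m - i)) (haq (2 * k + m + i))) (hqA i))
    (mul_ne_zero (mul_ne_zero (mul_ne_zero (hqA (m - i)) (hqA i)) (hcA (m + 1) i)) (hcB (m + 1)))]
  linear_combination ((1 - c * q ^ (2 * i)) * q ^ (i * (i - 1) / 2) *
    qp q q i * qp q q (m - i)) * key

lemma orthoMN (q a : ℂ) (hq : ∀ k : ℕ, 1 ≤ k → q ^ k ≠ 1) (ha : ∀ k : ℕ, a * q ^ k ≠ 1)
    (k m : ℕ) :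
    ∑ j ∈ Finset.Icc k (k + m), Mm q a (k + m) j * Nm q a j k
      = if m = 0 then 1 else 0 := by
  have hc : ∀ s : ℕ, a * q ^ (2 * k) * q ^ s ≠ 1 := fun s => by
    rw [mul_assoc, ← pow_add]; exact ha _
  rw [← Finset.Ico_add_one_right_eq_Icc, Finset.sum_Ico_eq_sum_range,
    show k + m + 1 - k = m + 1 from by omega]
  rw [Finset.sum_congr rfl (fun i hi =>
    term_eq q a hq ha k m i (by have := Finset.mem_range.mp hi; omega))]
  rw [← Finset.sum_div]
  rcases Nat.eq_zero_or_pos m with hm | hm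
  · subst hm
    rw [Finset.sum_range_one, if_pos rfl]
    have h1 : (1 : ℂ) - a * q ^ (2 * k) ≠ 0 := sub_ne_zero.mpr fun h => by
      have := hc 0; rw [pow_zero, mul_one] at this; exact this h.symm
    simp [tt, qp, Finset.prod_range_one]
    simpa using h1
  · rw [Tsum q _ hq hc m hm, zero_div, if_neg (by omega)]

lemma orthoNM (q a : ℂ) (hq : ∀ k : ℕ, 1 ≤ k → q ^ k ≠ 1) (ha : ∀ k : ℕ, a * q ^ k ≠ 1)
    (k m : ℕ) :
    ∑ j ∈ Finset.Icc k (k + m), Nm q a (k + m) j * Mm q a j k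
      = if m = 0 then 1 else 0 := by
  set K := k + m with hK
  have conv : ∀ (i j : Fin (K + 1)) (F : ℕ → ℂ),
      (∑ x : Fin (K + 1), if (j : ℕ) ≤ (x : ℕ) ∧ (x : ℕ) ≤ (i : ℕ) then F (x : ℕ) else 0)
        = ∑ x ∈ Finset.Icc (j : ℕ) (i : ℕ), F x := by
    intro i j F
    rw [Fin.sum_univ_eq_sum_range (fun x => if (j : ℕ) ≤ x ∧ x ≤ (i : ℕ) then F x else 0) (K + 1)]
    rw [← Finset.sum_filter]
    apply Finset.sum_congr _ (fun _ _ => rfl)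
    ext x
    simp only [Finset.mem_filter, Finset.mem_range, Finset.mem_Icc]
    have := i.isLt
    omega
  set A : Matrix (Fin (K + 1)) (Fin (K + 1)) ℂ :=
    fun i j => if (j : ℕ) ≤ (i : ℕ) then Mm q a i j else 0 with hA
  set B : Matrix (Fin (K + 1)) (Fin (K + 1)) ℂ :=
    fun i j => if (j : ℕ) ≤ (i : ℕ) then Nm q a i j else 0 with hB
  have hAB : A * B = 1 := by
    ext i j
    rw [Matrix.mul_apply, Matrix.one_apply]
    have h1 : ∀ x : Fin (K + 1), A i x * B x j =
        if (j : ℕ) ≤ (x : ℕ) ∧ (x : ℕ) ≤ (i : ℕ) then Mm q a i x * Nm q a x j else 0 := by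
      intro x
      rw [hA, hB]
      by_cases h1 : (x : ℕ) ≤ (i : ℕ) <;> by_cases h2 : (j : ℕ) ≤ (x : ℕ) <;>
        simp [h1, h2]
    rw [Finset.sum_congr rfl (fun x _ => h1 x), conv i j (fun x => Mm q a (i : ℕ) x * Nm q a x (j : ℕ))]
    by_cases hji : (j : ℕ) ≤ (i : ℕ)
    · obtain ⟨d, hd⟩ : ∃ d, (i : ℕ) = (j : ℕ) + d := ⟨i - j, by omega⟩
      rw [hd, orthoMN q a hq ha (j : ℕ) d]
      have hiff : (i = j) ↔ d = 0 := by rw [Fin.ext_iff]; omega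
      by_cases hd0 : d = 0 <;> simp [hd0, hiff]
    · have hempty : Finset.Icc (j : ℕ) (i : ℕ) = ∅ := by
        rw [Finset.Icc_eq_empty]; omega
      rw [hempty, Finset.sum_empty, if_neg (fun h => hji (by rw [h]))]
  have hBA : B * A = 1 := mul_eq_one_comm.mp hAB
  have hext := congrFun (congrFun hBA ⟨K, by omega⟩) ⟨k, by omega⟩
  rw [Matrix.mul_apply, Matrix.one_apply] at hext
  have h1 : ∀ x : Fin (K + 1), B ⟨K, by omega⟩ x * A x ⟨k, by omega⟩ =
      if (k : ℕ) ≤ (x : ℕ) ∧ (x : ℕ) ≤ K then Nm q a K x * Mm q a x k else 0 := by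
    intro x
    rw [hA, hB]
    by_cases h1 : (x : ℕ) ≤ K <;> by_cases h2 : k ≤ (x : ℕ) <;> simp [h1, h2]
  rw [Finset.sum_congr rfl (fun x _ => h1 x),
    conv ⟨K, by omega⟩ ⟨k, by omega⟩ (fun x => Nm q a K x * Mm q a x k)] at hext
  rw [hext]
  have : ((⟨K, by omega⟩ : Fin (K + 1)) = ⟨k, by omega⟩) ↔ m = 0 := by
    rw [Fin.ext_iff]; simp; omega
  by_cases hm : m = 0 <;> simp [hm, this]

lemma sum_ite_le {f : ℕ → ℂ} {j n : ℕ} (h : j ≤ n) :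
    (∑ k ∈ Finset.range (n + 1), if k ≤ j then f k else 0) = ∑ k ∈ Finset.range (j + 1), f k := by
  rw [← Finset.sum_filter]
  apply Finset.sum_congr _ (fun _ _ => rfl)
  ext x
  simp only [Finset.mem_filter, Finset.mem_range]
  omega

lemma sum_ite_ge {g : ℕ → ℂ} {k n : ℕ} :
    (∑ j ∈ Finset.range (n + 1), if k ≤ j then g j else 0) = ∑ j ∈ Finset.Icc k n, g j := by
  rw [← Finset.sum_filter]
  apply Finset.sum_congr _ (fun _ _ => rfl)
  ext x
  simp only [Finset.mem_filter, Finset.mem_range, Finset.mem_Icc]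
  omega

lemma inv_step (P Q : ℕ → ℕ → ℂ) (γ : ℕ → ℂ)
    (h : ∀ k m : ℕ, ∑ j ∈ Finset.Icc k (k + m), P (k + m) j * Q j k = if m = 0 then 1 else 0)
    (n : ℕ) :
    ∑ j ∈ Finset.range (n + 1), P n j * ∑ k ∈ Finset.range (j + 1), Q j k * γ k = γ n := by
  calc
    ∑ j ∈ Finset.range (n + 1), P n j * ∑ k ∈ Finset.range (j + 1), Q j k * γ k
      = ∑ j ∈ Finset.range (n + 1), ∑ k ∈ Finset.range (n + 1),
          (if k ≤ j then P n j * (Q j k * γ k) else 0) := by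
        apply Finset.sum_congr rfl
        intro j hj
        rw [Finset.mul_sum, ← sum_ite_le (Nat.lt_succ_iff.mp (Finset.mem_range.mp hj))]
    _ = ∑ k ∈ Finset.range (n + 1), ∑ j ∈ Finset.range (n + 1),
          (if k ≤ j then P n j * (Q j k * γ k) else 0) := Finset.sum_comm
    _ = ∑ k ∈ Finset.range (n + 1), (if n - k = 0 then 1 else 0) * γ k := by
        apply Finset.sum_congr rfl
        intro k hk
        have hkn : k ≤ n := Nat.lt_succ_iff.mp (Finset.mem_range.mp hk)
        rw [sum_ite_ge]
        have h2 : ∑ j ∈ Finset.Icc k n, P n j * (Q j k * γ k)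
            = (∑ j ∈ Finset.Icc k n, P n j * Q j k) * γ k := by
          rw [Finset.sum_mul]
          apply Finset.sum_congr rfl
          intro j _
          ring
        rw [h2]
        have h3 := h k (n - k)
        rw [show k + (n - k) = n from by omega] at h3
        rw [h3]
    _ = γ n := by
        rw [Finset.sum_eq_single_of_mem n (Finset.self_mem_range_succ n)]
        · simp
        · intro b hb hbn
          have : ¬ (n - b = 0) := by
            have := Nat.lt_succ_iff.mp (Finset.mem_range.mp hb)
            omega
          rw [if_neg this, zero_mul]

/-- Bailey pair inversion: `(α, β)` satisfy the Bailey pair relation relative to `a`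
iff `α` is recovered from `β` by the inverse relation. -/
theorem bailey_inversion (q a : ℂ)
    (hq : ∀ k : ℕ, 1 ≤ k → q ^ k ≠ 1) (ha : ∀ k : ℕ, a * q ^ k ≠ 1)
    (α β : ℕ → ℂ) :
    (∀ n, β n = ∑ j ∈ Finset.range (n + 1),
        α j / (qp q q (n - j) * qp q (a * q) (n + j)))
      ↔
    (∀ n, α n = (1 - a * q ^ (2 * n)) / (1 - a) *
      ∑ j ∈ Finset.range (n + 1),
        qp q a (n + j) / qp q q (n - j) * (-1) ^ (n - j) *
          q ^ ((n - j) * (n - j - 1) / 2) * β j) := by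
  have hNsum : ∀ nn : ℕ, (1 - a * q ^ (2 * nn)) / (1 - a) *
      ∑ j ∈ Finset.range (nn + 1),
        qp q a (nn + j) / qp q q (nn - j) * (-1) ^ (nn - j) *
          q ^ ((nn - j) * (nn - j - 1) / 2) * β j
      = ∑ j ∈ Finset.range (nn + 1), Nm q a nn j * β j := by
    intro nn
    rw [Finset.mul_sum]
    apply Finset.sum_congr rfl
    intro j _
    rw [Nm]
    ring
  have hMsum : ∀ nn : ℕ, (∑ j ∈ Finset.range (nn + 1),
        α j / (qp q q (nn - j) * qp q (a * q) (nn + j)))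
      = ∑ j ∈ Finset.range (nn + 1), Mm q a nn j * α j := by
    intro nn
    apply Finset.sum_congr rfl
    intro j _
    rw [Mm, div_eq_mul_inv, mul_comm]
  constructor
  · intro hL n
    rw [hNsum n]
    have hβ' : ∀ j : ℕ, β j = ∑ k ∈ Finset.range (j + 1), Mm q a j k * α k := by
      intro j
      rw [hL j, hMsum j]
    calc α n
        = ∑ j ∈ Finset.range (n + 1), Nm q a n j *
            ∑ k ∈ Finset.range (j + 1), Mm q a j k * α k := by
          rw [(inv_step (Nm q a) (Mm q a) α (fun k m => orthoNM q a hq ha k m) n)]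
      _ = ∑ j ∈ Finset.range (n + 1), Nm q a n j * β j := by
          apply Finset.sum_congr rfl
          intro j _
          rw [← hβ' j]
  · intro hR n
    rw [hMsum n]
    have hα' : ∀ j : ℕ, α j = ∑ k ∈ Finset.range (j + 1), Nm q a j k * β k := by
      intro j
      rw [hR j, hNsum j]
    calc β n
        = ∑ j ∈ Finset.range (n + 1), Mm q a n j *
            ∑ k ∈ Finset.range (j + 1), Nm q a j k * β k := by
          rw [(inv_step (Mm q a) (Nm q a) β (fun k m => orthoMN q a hq ha k m) n)]
      _ = ∑ j ∈ Finset.range (n + 1), Mm q a n j * α j := by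
          apply Finset.sum_congr rfl
          intro j _
          rw [← hα' j]
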